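/- A right-continuous supermartingale dominated in absolute value by an RCLL uniformly integrable martingale is of class (D): the family of its values at all stopping times with values in [0,T] is uniformly integrable. -/

import Mathlib

open MeasureTheory Filter
open scoped ENNReal NNReal

private lemma measurable_comp_of_countable_range' {Ω : Type*} [MeasurableSpace Ω]
    {X : ℝ → Ω → ℝ} (hX : ∀ t, Measurable (X t)) {τ : Ω → ℝ} (hτ : Measurable τ)
    (hc : (Set.range τ).Countable) : Measurable fun ω => X (τ ω) ω := by
  intro s hs
  have heq : (fun ω => X (τ ω) ω) ⁻¹' s = ⋃ v ∈ Set.range τ, (τ ⁻¹' {v} ∩ X v ⁻¹' s) := by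
    ext ω
    simp only [Set.mem_preimage, Set.mem_iUnion, Set.mem_inter_iff, Set.mem_singleton_iff,
      Set.mem_range, exists_prop]
    constructor
    · intro h; exact ⟨τ ω, ⟨ω, rfl⟩, rfl, h⟩
    · rintro ⟨v, -, hv, h⟩
      rw [hv]; exact h
  rw [heq]
  exact MeasurableSet.biUnion hc fun v _ => (hτ (measurableSet_singleton v)).inter (hX v hs)

private lemma abs_condexp_le_condexp_abs' {Ω : Type*} {m m0 : MeasurableSpace Ω} {μ : Measure Ω}
    [IsFiniteMeasure μ] {f : Ω → ℝ} (hf : Integrable f μ) :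
    ∀ᵐ ω ∂μ, |(μ[f|m]) ω| ≤ (μ[(fun ω => |f ω|)|m]) ω := by
  have h1 : μ[f|m] ≤ᵐ[μ] μ[(fun ω => |f ω|)|m] :=
    condExp_mono hf hf.abs (Filter.Eventually.of_forall fun ω => le_abs_self _)
  have h2 : μ[-f|m] ≤ᵐ[μ] μ[(fun ω => |f ω|)|m] :=
    condExp_mono hf.neg hf.abs (Filter.Eventually.of_forall fun ω => show -(f ω) ≤ |f ω| from neg_le_abs _)
  filter_upwards [h1, h2, condExp_neg (m := m) (μ := μ) f] with ω h1 h2 h3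
  rw [abs_le]
  refine ⟨?_, h1⟩
  have : -(μ[f|m]) ω ≤ (μ[(fun ω => |f ω|)|m]) ω := by
    rw [← Pi.neg_apply, ← h3]; exact h2
  linarith

/-- A right-continuous supermartingale (with left limits) dominated in absolute
value by an RCLL uniformly integrable martingale is of class (D): the family of
its values at all stopping times with values in `[0, T]` is uniformly
integrable. -/
theorem rcll_dominated_supermartingale_classD
    {Ω : Type*} {m0 : MeasurableSpace Ω}
    (μ : Measure Ω) [IsProbabilityMeasure μ]
    (ℱ : Filtration ℝ m0) (X M : ℝ → Ω → ℝ) (TT : ℝ)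
    (hX : Supermartingale X ℱ μ)
    (hXrc : ∀ ω t, ContinuousWithinAt (fun u => X u ω) (Set.Ici t) t)
    (hXll : ∀ ω t, ∃ l : ℝ, Tendsto (fun u => X u ω) (nhdsWithin t (Set.Iio t)) (nhds l))
    (hM : Martingale M ℱ μ)
    (hMrc : ∀ ω t, ContinuousWithinAt (fun u => M u ω) (Set.Ici t) t)
    (hMll : ∀ ω t, ∃ l : ℝ, Tendsto (fun u => M u ω) (nhdsWithin t (Set.Iio t)) (nhds l))
    (hMui : UniformIntegrable (fun t : ℝ => M t) 1 μ)
    (hdom : ∀ t : ℝ, ∀ᵐ ω ∂μ, |X t ω| ≤ M t ω) :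
    UniformIntegrable
      (fun ρ : {ρ : Ω → ℝ // IsStoppingTime ℱ (fun ω => (ρ ω : WithTop ℝ)) ∧ ∀ ω, ρ ω ∈ Set.Icc 0 TT} =>
        fun ω => X (ρ.1 ω) ω) 1 μ := by
  classical
  set T' : ℝ := TT + 1 with hT'def
  have hgint : Integrable (fun ω => |M T' ω|) μ := (hM.integrable T').abs
  set G : {m' : MeasurableSpace Ω // m' ≤ m0} → Ω → ℝ :=
    fun m' => μ[(fun ω => |M T' ω|)|m'.1] with hGdef
  have hGui : UniformIntegrable G 1 μ := hgint.uniformIntegrable_condExp fun m' => m'.2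
  have hXm : ∀ t, Measurable (X t) := fun t => ((hX.stronglyAdapted t).mono (ℱ.le t)).measurable
  -- a.e. domination at all times simultaneously
  have hdom' : ∀ᵐ ω ∂μ, ∀ t : ℝ, |X t ω| ≤ M t ω := by
    have hq : ∀ᵐ ω ∂μ, ∀ q : ℚ, |X (q : ℝ) ω| ≤ M (q : ℝ) ω := ae_all_iff.2 fun q => hdom q
    filter_upwards [hq] with ω hω t
    have hex : ∀ k : ℕ, ∃ q : ℚ, t < (q : ℝ) ∧ (q : ℝ) < t + 1 / (k + 1) := by
      intro k
      have hpos : t < t + 1 / ((k : ℝ) + 1) := by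
        have : (0:ℝ) < 1 / ((k : ℝ) + 1) := by positivity
        linarith
      obtain ⟨q, hq1, hq2⟩ := exists_rat_btwn hpos
      exact ⟨q, hq1, hq2⟩
    choose u hu1 hu2 using hex
    have hten : Tendsto (fun k => (u k : ℝ)) atTop (nhds t) := by
      have h0 : Tendsto (fun k : ℕ => t + 1 / (k + 1 : ℝ)) atTop (nhds t) := by
        have : Tendsto (fun n : ℕ => 1 / ((n : ℝ) + 1)) atTop (nhds 0) := tendsto_one_div_add_atTop_nhds_zero_nat
        simpa using tendsto_const_nhds.add this
      exact tendsto_of_tendsto_of_tendsto_of_le_of_le tendsto_const_nhds h0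
        (fun k => (hu1 k).le) (fun k => (hu2 k).le)
    have htenw : Tendsto (fun k => (u k : ℝ)) atTop (nhdsWithin t (Set.Ici t)) :=
      tendsto_nhdsWithin_iff.2 ⟨hten, Filter.Eventually.of_forall fun k => (hu1 k).le⟩
    have hXt : Tendsto (fun k => X (u k : ℝ) ω) atTop (nhds (X t ω)) :=
      (hXrc ω t).tendsto.comp htenw
    have hMt : Tendsto (fun k => M (u k : ℝ) ω) atTop (nhds (M t ω)) :=
      (hMrc ω t).tendsto.comp htenw
    exact le_of_tendsto_of_tendsto' hXt.abs hMt fun k => hω (u k)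
  -- key estimate for each stopping time
  have key : ∀ ρ : {ρ : Ω → ℝ // IsStoppingTime ℱ (fun ω => (ρ ω : WithTop ℝ)) ∧ ∀ ω, ρ ω ∈ Set.Icc 0 TT},
      (Measurable fun ω => X (ρ.1 ω) ω) ∧
      ∀ s : Set Ω, MeasurableSet s → ∀ c : ℝ≥0∞,
        (∀ m' : {m' : MeasurableSpace Ω // m' ≤ m0}, eLpNorm (s.indicator (G m')) 1 μ ≤ c) →
        eLpNorm (s.indicator fun ω => X (ρ.1 ω) ω) 1 μ ≤ c := by
    rintro ⟨ρ, hρ, hρmem⟩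
    have h2pos : ∀ n : ℕ, (0 : ℝ) < 2 ^ n := fun n => by positivity
    set σ : ℕ → Ω → ℝ := fun n ω => (⌈ρ ω * 2 ^ n⌉ : ℝ) / 2 ^ n with hσdef
    have hρσ : ∀ n ω, ρ ω ≤ σ n ω := fun n ω => by
      rw [hσdef, le_div_iff₀ (h2pos n)]; exact Int.le_ceil _
    have hσle : ∀ n ω, σ n ω ≤ ρ ω + ((2 : ℝ) ^ n)⁻¹ := fun n ω => by
      rw [hσdef, div_le_iff₀ (h2pos n)]
      have h1 := (Int.ceil_lt_add_one (ρ ω * 2 ^ n)).le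
      have h2 : (ρ ω + ((2 : ℝ) ^ n)⁻¹) * 2 ^ n = ρ ω * 2 ^ n + 1 := by
        field_simp
      linarith
    have hσT' : ∀ n ω, σ n ω ≤ T' := by
      intro n ω
      have hinv : ((2 : ℝ) ^ n)⁻¹ ≤ 1 := by
        rw [inv_le_one_iff₀]; right; exact one_le_pow₀ one_le_two
      have := hσle n ω
      have h2 := (hρmem ω).2
      rw [hT'def]; linarith
    have hσ_stop : ∀ n, IsStoppingTime ℱ (fun ω => (σ n ω : WithTop ℝ)) := by
      intro n t
      have heq : {ω | σ n ω ≤ t} = {ω | ρ ω ≤ (⌊t * 2 ^ n⌋ : ℝ) / 2 ^ n} := by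
        ext ω
        simp only [Set.mem_setOf_eq, hσdef]
        rw [div_le_iff₀ (h2pos n), le_div_iff₀ (h2pos n)]
        constructor
        · intro h
          have h' : (⌈ρ ω * 2 ^ n⌉ : ℤ) ≤ ⌊t * 2 ^ n⌋ := by
            rw [Int.le_floor]; exact_mod_cast h
          calc ρ ω * 2 ^ n ≤ (⌈ρ ω * 2 ^ n⌉ : ℝ) := Int.le_ceil _
            _ ≤ (⌊t * 2 ^ n⌋ : ℝ) := by exact_mod_cast h'
        · intro h
          have h' : (⌈ρ ω * 2 ^ n⌉ : ℤ) ≤ ⌊t * 2 ^ n⌋ := Int.ceil_le.2 h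
          calc (⌈ρ ω * 2 ^ n⌉ : ℝ) ≤ (⌊t * 2 ^ n⌋ : ℝ) := by exact_mod_cast h'
            _ ≤ t * 2 ^ n := Int.floor_le _
      simp only [WithTop.coe_le_coe]
      rw [heq]
      have hle : (⌊t * 2 ^ n⌋ : ℝ) / 2 ^ n ≤ t := by
        rw [div_le_iff₀ (h2pos n)]; exact Int.floor_le _
      exact ℱ.mono hle _ (by have := hρ ((⌊t * 2 ^ n⌋ : ℝ) / 2 ^ n); simp only [WithTop.coe_le_coe] at this; exact this)
    have hσ_count : ∀ n, (Set.range (σ n)).Countable := fun n =>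
      (Set.countable_range fun k : ℤ => (k : ℝ) / 2 ^ n).mono
        (by rintro x ⟨ω, rfl⟩; exact ⟨⌈ρ ω * 2 ^ n⌉, rfl⟩)
    have hσ_meas : ∀ n, Measurable (σ n) := fun n =>
      measurable_of_Iic fun x => ℱ.le x _ (by have := hσ_stop n x; simp only [WithTop.coe_le_coe] at this; exact this)
    have hσ_tendsto : ∀ ω, Tendsto (fun n => σ n ω) atTop
        (nhdsWithin (ρ ω) (Set.Ici (ρ ω))) := by
      intro ω
      rw [tendsto_nhdsWithin_iff]
      constructor
      · have hlim : Tendsto (fun n : ℕ => ρ ω + ((2 : ℝ) ^ n)⁻¹) atTop (nhds (ρ ω)) := by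
          have h0 : Tendsto (fun n : ℕ => ((2 : ℝ) ^ n)⁻¹) atTop (nhds 0) := by
            simp_rw [← inv_pow]
            exact tendsto_pow_atTop_nhds_zero_of_lt_one (by norm_num) (by norm_num)
          simpa using tendsto_const_nhds.add h0
        exact tendsto_of_tendsto_of_tendsto_of_le_of_le tendsto_const_nhds hlim
          (fun n => hρσ n ω) (fun n => hσle n ω)
      · exact Filter.Eventually.of_forall fun n => hρσ n ω
    have hMσ_tendsto : ∀ ω, Tendsto (fun n => M (σ n ω) ω) atTop (nhds (M (ρ ω) ω)) :=
      fun ω => (hMrc ω (ρ ω)).tendsto.comp (hσ_tendsto ω)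
    have hXσ_tendsto : ∀ ω, Tendsto (fun n => X (σ n ω) ω) atTop (nhds (X (ρ ω) ω)) :=
      fun ω => (hXrc ω (ρ ω)).tendsto.comp (hσ_tendsto ω)
    have hXρ_meas : Measurable fun ω => X (ρ ω) ω := by
      refine measurable_of_tendsto_metrizable
        (fun n => measurable_comp_of_countable_range' hXm (hσ_meas n) (hσ_count n)) ?_
      exact tendsto_pi_nhds.2 hXσ_tendsto
    refine ⟨hXρ_meas, ?_⟩
    set msp : ℕ → {m' : MeasurableSpace Ω // m' ≤ m0} := fun n =>
      ⟨(hσ_stop n).measurableSpace, (hσ_stop n).measurableSpace_le_of_le (fun ω => WithTop.coe_le_coe.2 (hσT' n ω))⟩ with hmspdef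
    have hOS : ∀ n, stoppedValue M (fun ω => (σ n ω : WithTop ℝ)) =ᵐ[μ] μ[M T'|(hσ_stop n).measurableSpace] := fun n =>
      hM.stoppedValue_ae_eq_condExp_of_le_const_of_countable_range (hσ_stop n) (fun ω => WithTop.coe_le_coe.2 (hσT' n ω))
        (((hσ_count n).image (fun x : ℝ => (x : WithTop ℝ))).mono (by rintro _ ⟨ω, rfl⟩; exact ⟨σ n ω, ⟨ω, rfl⟩, rfl⟩))
    have hMG : ∀ᵐ ω ∂μ, ∀ n : ℕ, |M (σ n ω) ω| ≤ G (msp n) ω := by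
      rw [ae_all_iff]
      intro n
      filter_upwards [hOS n, abs_condexp_le_condexp_abs'
        (m := (hσ_stop n).measurableSpace) (hM.integrable T')] with ω h1 h2
      have : M (σ n ω) ω = (μ[M T'|(hσ_stop n).measurableSpace]) ω := h1
      rw [this]
      exact h2
    have hae : ∀ᵐ ω ∂μ, (‖X (ρ ω) ω‖₊ : ℝ≥0∞) ≤
        Filter.liminf (fun n => (‖G (msp n) ω‖₊ : ℝ≥0∞)) atTop := by
      filter_upwards [hdom', hMG] with ω h1 h2
      have hXle : |X (ρ ω) ω| ≤ M (ρ ω) ω := h1 (ρ ω)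
      have hlim : Tendsto (fun n => (‖M (σ n ω) ω‖₊ : ℝ≥0∞)) atTop
          (nhds (‖M (ρ ω) ω‖₊ : ℝ≥0∞)) :=
        (ENNReal.continuous_coe.tendsto _).comp
          ((continuous_nnnorm.tendsto _).comp (hMσ_tendsto ω))
      have hstep : (‖X (ρ ω) ω‖₊ : ℝ≥0∞) ≤
          Filter.liminf (fun n => (‖M (σ n ω) ω‖₊ : ℝ≥0∞)) atTop := by
        rw [hlim.liminf_eq]
        have hnorm : ‖X (ρ ω) ω‖₊ ≤ ‖M (ρ ω) ω‖₊ := by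
          rw [← NNReal.coe_le_coe, coe_nnnorm, coe_nnnorm, Real.norm_eq_abs, Real.norm_eq_abs]
          exact hXle.trans (le_abs_self _)
        exact ENNReal.coe_le_coe.2 hnorm
      refine hstep.trans (Filter.liminf_le_liminf (Filter.Eventually.of_forall fun n => ?_))
      refine ENNReal.coe_le_coe.2 ?_
      rw [← NNReal.coe_le_coe, coe_nnnorm, coe_nnnorm, Real.norm_eq_abs, Real.norm_eq_abs]
      exact (h2 n).trans (le_abs_self _)
    intro s hs c hc
    have hGmeas : ∀ n, Measurable fun ω => (‖G (msp n) ω‖₊ : ℝ≥0∞) := fun n =>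
      (stronglyMeasurable_condExp (μ := μ) (f := fun ω => |M T' ω|) |>.mono (msp n).2).measurable.enorm
    rw [eLpNorm_indicator_eq_eLpNorm_restrict hs, eLpNorm_one_eq_lintegral_enorm]
    calc ∫⁻ ω, (‖X (ρ ω) ω‖₊ : ℝ≥0∞) ∂(μ.restrict s)
        ≤ ∫⁻ ω, Filter.liminf (fun n => (‖G (msp n) ω‖₊ : ℝ≥0∞)) atTop ∂(μ.restrict s) :=
          lintegral_mono_ae (ae_restrict_of_ae hae)
      _ ≤ Filter.liminf (fun n => ∫⁻ ω, (‖G (msp n) ω‖₊ : ℝ≥0∞) ∂(μ.restrict s)) atTop :=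
          lintegral_liminf_le hGmeas
      _ ≤ c := by
          refine Filter.liminf_le_of_frequently_le' (Filter.Frequently.of_forall fun n => ?_)
          have := hc (msp n)
          rwa [eLpNorm_indicator_eq_eLpNorm_restrict hs, eLpNorm_one_eq_lintegral_enorm] at this
  refine ⟨fun ρ => ((key ρ).1).aestronglyMeasurable, ?_, ?_⟩
  · intro ε hε
    obtain ⟨δ, hδ, h⟩ := hGui.2.1 hε
    exact ⟨δ, hδ, fun ρ s hs hμs => (key ρ).2 s hs _ fun m' => h m' s hs hμs⟩
  · obtain ⟨C, hC⟩ := hGui.2.2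
    refine ⟨C, fun ρ => ?_⟩
    have := (key ρ).2 Set.univ MeasurableSet.univ C fun m' => by
      simpa [Set.indicator_univ] using hC m'
    simpa [Set.indicator_univ] using this
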